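/- Let f : U → V be a map in the set-up and let X be a finite union of puzzle pieces which is nice. Then for every z ∈ D(X) ∖ X: every w ∈ L_z(X) satisfies w ∈ D(X) ∖ X and L_w(X) = L_z(X); and every w′ ∈ D(X) ∖ X with w′ ∉ L_z(X) satisfies L_{w′}(X) ∩ L_z(X) = ∅. -/

import Mathlib

open Set Function Topology

noncomputable section

/-- A (bounded) Jordan domain in the plane: a bounded connected open set whose
frontier is a Jordan curve, i.e. an injective continuous image of the circle. -/
def IsJordanDomain (Ω : Set ℂ) : Prop :=
  IsOpen Ω ∧ IsConnected Ω ∧ Bornology.IsBounded Ω ∧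
  ∃ g : Metric.sphere (0:ℂ) 1 → ℂ, Continuous g ∧ Function.Injective g ∧
    Set.range g = frontier Ω

/-- `A` is strictly contained in `X`: it is a proper subset of some connected
component of `X`. -/
def StrictlyContainedIn (A X : Set ℂ) : Prop :=
  ∃ x ∈ X, A ⊂ connectedComponentIn X x

/-- The set-up: `V ⊆ ℂ` is open with finitely many components, each a bounded Jordan
domain, with pairwise disjoint closures; `U` is open with closure contained in `V`,
with finitely many components with pairwise disjoint closures; `f : U → V` is proper
holomorphic; every critical point of `f` lies in `K_f`. -/
structure Setup where
  U : Set ℂ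
  V : Set ℂ
  f : ℂ → ℂ
  hV_open : IsOpen V
  hV_comp_finite : {C : Set ℂ | ∃ x ∈ V, C = connectedComponentIn V x}.Finite
  hV_jordan : ∀ x ∈ V, IsJordanDomain (connectedComponentIn V x)
  hV_disj : ∀ x ∈ V, ∀ y ∈ V, connectedComponentIn V x ≠ connectedComponentIn V y →
    closure (connectedComponentIn V x) ∩ closure (connectedComponentIn V y) = ∅
  hU_open : IsOpen U
  hUV : closure U ⊆ V
  hU_comp_finite : {C : Set ℂ | ∃ x ∈ U, C = connectedComponentIn U x}.Finite
  hU_disj : ∀ x ∈ U, ∀ y ∈ U, connectedComponentIn U x ≠ connectedComponentIn U y →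
    closure (connectedComponentIn U x) ∩ closure (connectedComponentIn U y) = ∅
  hf_maps : Set.MapsTo f U V
  hf_holo : DifferentiableOn ℂ f U
  hf_proper : ∀ K ⊆ V, IsCompact K → IsCompact (U ∩ f ⁻¹' K)
  hf_crit : ∀ z ∈ U, deriv f z = 0 → ∀ n : ℕ, f^[n] z ∈ U

namespace Setup

variable (S : Setup)

/-- `K_f = {z ∈ U : f^n(z) ∈ U for all n}`. -/
def K : Set ℂ := {z | z ∈ S.U ∧ ∀ n : ℕ, S.f^[n] z ∈ S.U}

/-- The set of critical points of `f`. -/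
def Crit : Set ℂ := {z | z ∈ S.U ∧ deriv S.f z = 0}

/-- `preV n = f^{-n}(V)`, preimages being taken for the partial map `f : U → V`. -/
def preV : ℕ → Set ℂ
  | 0 => S.V
  | n+1 => S.U ∩ S.f ⁻¹' (preV n)

/-- `P` is a puzzle piece of depth `n`: a connected component of `f^{-n}(V)`. -/
def IsPieceOfDepth (n : ℕ) (P : Set ℂ) : Prop :=
  ∃ x ∈ S.preV n, P = connectedComponentIn (S.preV n) x

/-- `P` is a puzzle piece. -/
def IsPiece (P : Set ℂ) : Prop := ∃ n, S.IsPieceOfDepth n P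

/-- `piece n x = P_n(x)`, the puzzle piece of depth `n` containing `x`. -/
def piece (n : ℕ) (x : ℂ) : Set ℂ := connectedComponentIn (S.preV n) x

/-- `X` is a finite union of puzzle pieces. -/
def IsPieceUnion (X : Set ℂ) : Prop :=
  ∃ P : Set (Set ℂ), P.Finite ∧ (∀ Q ∈ P, S.IsPiece Q) ∧ X = ⋃₀ P

/-- `X` is nice: for every connected component `P` of `X` and every `n ≥ 1`,
`f^n(P)` is not strictly contained in `X`. -/
def Nice (X : Set ℂ) : Prop :=
  ∀ x ∈ X, ∀ n : ℕ, 1 ≤ n →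
    ¬ StrictlyContainedIn (S.f^[n] '' connectedComponentIn X x) X

/-- `preIm X n = f^{-n}(X)`, preimages being taken for the partial map `f : U → V`. -/
def preIm (X : Set ℂ) : ℕ → Set ℂ
  | 0 => X
  | n+1 => S.U ∩ S.f ⁻¹' (preIm X n)

/-- `D(X) = ⋃_{k ≥ 0} f^{-k}(X)`. -/
def D (X : Set ℂ) : Set ℂ := ⋃ k, S.preIm X k

/-- For `z ∈ D(X) ∖ X`, `k` is the landing time `k(z)`: the minimal positive
integer with `f^k(z) ∈ X`. -/
def IsLandingTime (X : Set ℂ) (z : ℂ) (k : ℕ) : Prop :=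
  1 ≤ k ∧ S.f^[k] z ∈ X ∧ ∀ j, 1 ≤ j → j < k → S.f^[j] z ∉ X

/-- `landComp X z k = Comp_z(f^{-k}(Comp_{f^k(z)}(X)))`; for `k = k(z)` this is
`L_z(X)`. -/
def landComp (X : Set ℂ) (z : ℂ) (k : ℕ) : Set ℂ :=
  connectedComponentIn (S.preIm (connectedComponentIn X (S.f^[k] z)) k) z

/-- `x` combinatorially accumulates to `y`: for every `n ≥ 0` there is `j ≥ 1`
with `f^j(x) ∈ P_n(y)`. -/
def Acc (x y : ℂ) : Prop := ∀ n : ℕ, ∃ j : ℕ, 1 ≤ j ∧ S.f^[j] x ∈ S.piece n y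

/-- `Forw(x) = {y ∈ K_f : x → y}`. -/
def Forw (x : ℂ) : Set ℂ := {y | y ∈ S.K ∧ S.Acc x y}

/-- The equivalence `c1 ∼ c2` on critical points. -/
def Equiv (c1 c2 : ℂ) : Prop := c1 = c2 ∨ (S.Acc c1 c2 ∧ S.Acc c2 c1)

/-- The class `[c]` of a critical point `c`. -/
def cls (c : ℂ) : Set ℂ := {c' | c' ∈ S.Crit ∧ S.Equiv c c'}

/-- `D(f) = Crit(f)/∼`, the set of equivalence classes. -/
def classes : Set (Set ℂ) := {A | ∃ c ∈ S.Crit, A = S.cls c}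

/-- `[c1] → [c2]`. -/
def ClassAcc (A B : Set ℂ) : Prop := ∃ c1 ∈ A, ∃ c2 ∈ B, S.Acc c1 c2

/-- The partial order on classes: `A ≤ B` iff `A = B` or `B → A`. -/
def ClassLe (A B : Set ℂ) : Prop := A = B ∨ S.ClassAcc B A

/-- The minimal elements of a family of classes w.r.t. `ClassLe`. -/
def minimalsIn (T : Set (Set ℂ)) : Set (Set ℂ) :=
  {A | A ∈ T ∧ ∀ B ∈ T, S.ClassLe B A → B = A}

/-- Auxiliary: `(D_k(f), D_0(f) ∪ ⋯ ∪ D_k(f))`. -/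
def DlevelAux : ℕ → Set (Set ℂ) × Set (Set ℂ)
  | 0 => (S.minimalsIn S.classes, S.minimalsIn S.classes)
  | k+1 =>
      (S.minimalsIn (S.classes \ (DlevelAux k).2),
        (DlevelAux k).2 ∪ S.minimalsIn (S.classes \ (DlevelAux k).2))

/-- `Dlevel k = D_k(f)`. -/
def Dlevel (k : ℕ) : Set (Set ℂ) := (S.DlevelAux k).1

/-- Each connected component of `V` contains at most one critical point. -/
def OneCritPerComp : Prop :=
  ∀ c ∈ S.Crit, ∀ c' ∈ S.Crit,
    connectedComponentIn S.V c = connectedComponentIn S.V c' → c = c'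

/-- Assumption (∗∗): if `c` does not combinatorially accumulate to `c'`, then
`f^j(c) ∉ P_0(c')` for all `j ≥ 1`. -/
def StarStar : Prop :=
  ∀ c ∈ S.Crit, ∀ c' ∈ S.Crit, ¬ S.Acc c c' →
    ∀ j : ℕ, 1 ≤ j → S.f^[j] c ∉ S.piece 0 c'

/-- `K_f(x)`, the connected component of `K_f` containing `x`. -/
def Kcomp (x : ℂ) : Set ℂ := connectedComponentIn S.K x

/-- `P_{n+k}(c1)` is a child of `P_n(c2)`: `f^k(P_{n+k}(c1)) = P_n(c2)` and
`f^{k-1}` maps `P_{n+k-1}(f(c1))` conformally onto `P_n(c2)`. -/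
def IsChild (c1 : ℂ) (k : ℕ) (n : ℕ) (c2 : ℂ) : Prop :=
  1 ≤ k ∧ S.f^[k] '' S.piece (n+k) c1 = S.piece n c2 ∧
  Set.InjOn (S.f^[k-1]) (S.piece (n+k-1) (S.f c1)) ∧
  S.f^[k-1] '' S.piece (n+k-1) (S.f c1) = S.piece n c2

/-- `c` is persistently recurrent: for every `n ≥ 0` and every `c' ∈ [c]`,
`P_n(c')` has only finitely many children. -/
def PersistentlyRecurrent (c : ℂ) : Prop :=
  ∀ n : ℕ, ∀ c' ∈ S.cls c,
    {Q : Set ℂ | ∃ c1 ∈ S.cls c, ∃ k : ℕ, S.IsChild c1 k n c' ∧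
      Q = S.piece (n+k) c1}.Finite

/-- `Crit_n(f)`. -/
def CritN : Set ℂ := {c | c ∈ S.Crit ∧ ∀ c' ∈ S.Crit, ¬ S.Acc c c'}

/-- `Crit_e(f)`. -/
def CritE : Set ℂ := {c | c ∈ S.Crit ∧ ¬ S.Acc c c ∧ ∃ c' ∈ S.Crit, S.Acc c c'}

/-- `Crit_r(f)`. -/
def CritR : Set ℂ := {c | c ∈ S.Crit ∧ S.Acc c c ∧ ¬ S.PersistentlyRecurrent c}

/-- `Crit_p(f)`. -/
def CritP : Set ℂ := {c | c ∈ S.Crit ∧ S.Acc c c ∧ S.PersistentlyRecurrent c}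

end Setup


namespace Setup

variable (S : Setup)

lemma U_subset_V : S.U ⊆ S.V := fun _ hx => S.hUV (subset_closure hx)

lemma mem_preIm {A : Set ℂ} {n : ℕ} {z : ℂ} :
    z ∈ S.preIm A n ↔ (∀ i < n, S.f^[i] z ∈ S.U) ∧ S.f^[n] z ∈ A := by
  induction n generalizing z with
  | zero => simp [preIm]
  | succ n ih =>
    simp only [preIm, Set.mem_inter_iff, Set.mem_preimage, ih]
    constructor
    · rintro ⟨hU, hall, hA⟩
      refine ⟨fun i hi => ?_, ?_⟩
      · cases i with
        | zero => simpa using hU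
        | succ i => rw [Function.iterate_succ_apply]; exact hall i (by omega)
      · rw [Function.iterate_succ_apply]; exact hA
    · rintro ⟨hall, hA⟩
      exact ⟨by simpa using hall 0 (by omega),
        fun i hi => by rw [← Function.iterate_succ_apply]; exact hall (i+1) (by omega),
        by rw [← Function.iterate_succ_apply]; exact hA⟩

lemma preV_eq (n : ℕ) : S.preV n = S.preIm S.V n := by
  induction n with
  | zero => rfl
  | succ n ih => simp only [preV, preIm, ih]

lemma mem_preV {n : ℕ} {z : ℂ} :
    z ∈ S.preV n ↔ (∀ i < n, S.f^[i] z ∈ S.U) ∧ S.f^[n] z ∈ S.V := by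
  rw [S.preV_eq]; exact S.mem_preIm

lemma preIm_mono {A B : Set ℂ} (h : A ⊆ B) (n : ℕ) : S.preIm A n ⊆ S.preIm B n := by
  induction n with
  | zero => exact h
  | succ n ih => exact Set.inter_subset_inter_right _ (Set.preimage_mono ih)

lemma preV_antitone {m n : ℕ} (h : m ≤ n) : S.preV n ⊆ S.preV m := by
  intro z hz
  rw [S.mem_preV] at hz ⊢
  refine ⟨fun i hi => hz.1 i (by omega), ?_⟩
  rcases eq_or_lt_of_le h with rfl | hlt
  · exact hz.2
  · exact S.U_subset_V (hz.1 m hlt)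

lemma preV_open (n : ℕ) : IsOpen (S.preV n) := by
  induction n with
  | zero => exact S.hV_open
  | succ n ih => exact S.hf_holo.continuousOn.isOpen_inter_preimage S.hU_open ih

lemma V_bounded : Bornology.IsBounded S.V := by
  have hsub : S.V ⊆ ⋃₀ {C : Set ℂ | ∃ x ∈ S.V, C = connectedComponentIn S.V x} :=
    fun x hx => ⟨connectedComponentIn S.V x, ⟨x, hx, rfl⟩, mem_connectedComponentIn hx⟩
  refine Bornology.IsBounded.subset ?_ hsub
  rw [Bornology.isBounded_sUnion S.hV_comp_finite]
  rintro C ⟨x, hx, rfl⟩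
  exact (S.hV_jordan x hx).2.2.1

lemma piece_subset {n : ℕ} {x : ℂ} : S.piece n x ⊆ S.preV n :=
  connectedComponentIn_subset _ _

lemma mem_piece {n : ℕ} {x : ℂ} (h : x ∈ S.preV n) : x ∈ S.piece n x :=
  mem_connectedComponentIn h

lemma piece_antitone {m n : ℕ} {x : ℂ} (h : m ≤ n) : S.piece n x ⊆ S.piece m x :=
  connectedComponentIn_mono x (S.preV_antitone h)

lemma piece_bounded (n : ℕ) (x : ℂ) : Bornology.IsBounded (S.piece n x) :=
  S.V_bounded.subset (S.piece_subset.trans (S.preV_antitone (Nat.zero_le n)))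

lemma preV_iter {m n : ℕ} {z : ℂ} (h : z ∈ S.preV (m + n)) : S.f^[m] z ∈ S.preV n := by
  rw [S.mem_preV] at h ⊢
  constructor
  · intro i hi
    rw [← Function.iterate_add_apply]
    exact h.1 (i + m) (by omega)
  · rw [← Function.iterate_add_apply]
    have : n + m = m + n := by omega
    rw [this]
    exact h.2

lemma contOn_iter (m : ℕ) : ∀ n, m ≤ n → ContinuousOn (S.f^[m]) (S.preV n) := by
  induction m with
  | zero => intro n _; simpa using continuousOn_id
  | succ m ih =>
    intro n hn
    obtain ⟨n', rfl⟩ : ∃ n', n = n' + 1 := ⟨n - 1, by omega⟩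
    rw [Function.iterate_succ]
    refine ContinuousOn.comp (ih n' (by omega)) (S.hf_holo.continuousOn.mono ?_) ?_
    · exact Set.inter_subset_left
    · exact fun z hz => hz.2

lemma image_piece {m n : ℕ} {x : ℂ} (hx : x ∈ S.preV (m + n)) :
    S.f^[m] '' S.piece (m + n) x ⊆ S.piece n (S.f^[m] x) := by
  have hcont : ContinuousOn (S.f^[m]) (S.piece (m + n) x) :=
    (S.contOn_iter m (m + n) (by omega)).mono S.piece_subset
  have hpre : IsPreconnected (S.f^[m] '' S.piece (m + n) x) :=
    isPreconnected_connectedComponentIn.image _ hcont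
  refine hpre.subset_connectedComponentIn ⟨x, S.mem_piece hx, rfl⟩ ?_
  rintro _ ⟨y, hy, rfl⟩
  exact S.preV_iter (S.piece_subset hy)

lemma closure_piece : ∀ n, ∀ x ∈ S.preV (n + 1), closure (S.piece (n + 1) x) ⊆ S.piece n x := by
  intro n
  induction n with
  | zero =>
    intro x hx
    have h1 : S.piece 1 x ⊆ S.U := S.piece_subset.trans (fun z hz => hz.1)
    have h2 : closure (S.piece 1 x) ⊆ S.V := (closure_mono h1).trans S.hUV
    exact (isPreconnected_connectedComponentIn.closure).subset_connectedComponentIn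
      (subset_closure (S.mem_piece hx)) h2
  | succ n ih =>
    intro x hx
    have hfx : S.f x ∈ S.preV (n + 1) := hx.2
    set K := closure (S.piece (n + 1) (S.f x)) with hKdef
    have hKc : IsCompact K :=
      Metric.isCompact_of_isClosed_isBounded isClosed_closure (S.piece_bounded _ _).closure
    have hKpn : K ⊆ S.preV n := (ih _ hfx).trans S.piece_subset
    have hKV : K ⊆ S.V := hKpn.trans (S.preV_antitone (Nat.zero_le n))
    have hP := S.hf_proper K hKV hKc
    have e : 1 + (n + 1) = n + 2 := by omega
    have himg : S.f^[1] '' S.piece (1 + (n + 1)) x ⊆ S.piece (n + 1) (S.f^[1] x) :=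
      S.image_piece (by rw [e]; exact hx)
    rw [e, Function.iterate_one] at himg
    have hsub : S.piece (n + 2) x ⊆ S.U ∩ S.f ⁻¹' K := by
      intro y hy
      exact ⟨(S.piece_subset hy).1, subset_closure (himg ⟨y, hy, rfl⟩)⟩
    have hcl : closure (S.piece (n + 2) x) ⊆ S.U ∩ S.f ⁻¹' K :=
      closure_minimal hsub hP.isClosed
    have hcl2 : closure (S.piece (n + 2) x) ⊆ S.preV (n + 1) := by
      intro y hy
      exact ⟨(hcl hy).1, hKpn (hcl hy).2⟩
    exact (isPreconnected_connectedComponentIn.closure).subset_connectedComponentIn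
      (subset_closure (S.mem_piece hx)) hcl2

lemma closure_piece_lt {m n : ℕ} {x : ℂ} (h : m < n) (hx : x ∈ S.preV n) :
    closure (S.piece n x) ⊆ S.piece m x := by
  obtain ⟨n', rfl⟩ : ∃ n', n = n' + 1 := ⟨n - 1, by omega⟩
  exact (S.closure_piece n' x hx).trans (S.piece_antitone (by omega))

lemma component_X_piece {X : Set ℂ} (hX : S.IsPieceUnion X) {y : ℂ} (hy : y ∈ X) :
    ∃ n, y ∈ S.preV n ∧ connectedComponentIn X y = S.piece n y := by
  obtain ⟨Ps, hfin, hp, rfl⟩ := hX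
  have key : ∀ Q ∈ Ps, ∀ p ∈ Q, ∃ n, p ∈ S.preV n ∧ Q = S.piece n p := by
    intro Q hQ p hp'
    obtain ⟨n, x, hx, rfl⟩ := hp Q hQ
    exact ⟨n, connectedComponentIn_subset _ _ hp', connectedComponentIn_eq hp'⟩
  have hopen : ∀ Q ∈ Ps, IsOpen Q := by
    intro Q hQ
    obtain ⟨n, x, hx, rfl⟩ := hp Q hQ
    exact (S.preV_open n).connectedComponentIn
  obtain ⟨Q0, hQ0mem, hyQ0⟩ := hy
  have hSyfin : Set.Finite {Q | Q ∈ Ps ∧ y ∈ Q} := hfin.subset (fun Q hQ => hQ.1)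
  obtain ⟨M, hM, hMmax⟩ :=
    Set.Finite.exists_maximalFor id _ hSyfin ⟨Q0, hQ0mem, hyQ0⟩
  obtain ⟨nM, hyM, hMe⟩ := key M hM.1 y hM.2
  refine ⟨nM, hyM, ?_⟩
  have hsup : S.piece nM y ⊆ connectedComponentIn (⋃₀ Ps) y := by
    refine isPreconnected_connectedComponentIn.subset_connectedComponentIn
      (S.mem_piece hyM) (show S.piece nM y ⊆ ⋃₀ Ps from hMe ▸ Set.subset_sUnion_of_mem hM.1)
  have hOopen : IsOpen (⋃₀ {Q | Q ∈ Ps ∧ ¬ Q ⊆ M}) :=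
    isOpen_sUnion (fun Q hQ => hopen Q hQ.1)
  have hMopen : IsOpen M := hopen M hM.1
  have hdisj : Disjoint M (⋃₀ {Q | Q ∈ Ps ∧ ¬ Q ⊆ M}) := by
    rw [Set.disjoint_sUnion_right]
    rintro Q ⟨hQP, hQM⟩
    rw [Set.disjoint_left]
    intro p hpM hpQ
    obtain ⟨nQ, hpQ', hQe⟩ := key Q hQP p hpQ
    have hMe2 : M = S.piece nM p := by
      have hpM' : p ∈ S.piece nM y := hMe ▸ hpM
      rw [hMe]
      exact connectedComponentIn_eq hpM'
    rcases le_total nQ nM with h | h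
    · have hMQ : M ⊆ Q := by rw [hMe2, hQe]; exact S.piece_antitone h
      have heq : M = Q := subset_antisymm hMQ (hMmax ⟨hQP, hMQ hM.2⟩ hMQ)
      exact hQM (by rw [← heq])
    · have : Q ⊆ M := by rw [hMe2, hQe]; exact S.piece_antitone h
      exact hQM this
  have hcover : ⋃₀ Ps ⊆ M ∪ ⋃₀ {Q | Q ∈ Ps ∧ ¬ Q ⊆ M} := by
    rintro p ⟨Q, hQ, hpQ⟩
    by_cases hQM : Q ⊆ M
    · exact Or.inl (hQM hpQ)
    · exact Or.inr ⟨Q, ⟨hQ, hQM⟩, hpQ⟩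
  have hvsub : connectedComponentIn (⋃₀ Ps) y ⊆ M :=
    isPreconnected_connectedComponentIn.subset_left_of_subset_union hMopen hOopen hdisj
      ((connectedComponentIn_subset _ _).trans hcover)
      ⟨y, mem_connectedComponentIn ⟨Q0, hQ0mem, hyQ0⟩, hM.2⟩
  exact subset_antisymm (hvsub.trans hMe.subset) hsup

lemma landing_unique {X : Set ℂ} {w : ℂ} {k k' : ℕ}
    (h : S.IsLandingTime X w k) (h' : S.IsLandingTime X w k') : k = k' := by
  by_contra hne
  rcases lt_or_gt_of_ne hne with hlt | hlt
  · exact h'.2.2 k h.1 hlt h.2.1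
  · exact h.2.2 k' h'.1 hlt h'.2.1

lemma mem_landComp_self {X : Set ℂ} {z : ℂ} {k : ℕ}
    (hz : z ∈ S.D X \ X) (hk : S.IsLandingTime X z k) : z ∈ S.landComp X z k := by
  refine mem_connectedComponentIn ?_
  obtain ⟨m, hm⟩ := Set.mem_iUnion.mp hz.1
  rw [S.mem_preIm] at hm
  have hm1 : k ≤ m := by
    by_contra h
    push_neg at h
    have hm0 : 1 ≤ m := by
      rcases Nat.eq_zero_or_pos m with rfl | h1
      · exact absurd (by simpa using hm.2) hz.2
      · exact h1
    exact hk.2.2 m hm0 h hm.2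
  rw [S.mem_preIm]
  exact ⟨fun i hi => hm.1 i (by omega), mem_connectedComponentIn hk.2.1⟩

lemma preIm_piece_comp {n k : ℕ} {c w : ℂ} (hc : c ∈ S.preV n)
    (hw : w ∈ S.preIm (S.piece n c) k) :
    connectedComponentIn (S.preIm (S.piece n c) k) w = S.piece (k + n) w := by
  have hsub : S.preIm (S.piece n c) k ⊆ S.preV (k + n) := by
    intro y hy
    rw [S.mem_preIm] at hy
    have hyk := S.mem_preV.mp (S.piece_subset hy.2)
    rw [S.mem_preV]
    constructor
    · intro i hi
      rcases lt_or_ge i k with h | h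
      · exact hy.1 i h
      · have he : S.f^[i] y = S.f^[i - k] (S.f^[k] y) := by
          rw [← Function.iterate_add_apply]; congr 1; omega
        rw [he]; exact hyk.1 (i - k) (by omega)
    · have he : S.f^[k + n] y = S.f^[n] (S.f^[k] y) := by
        rw [← Function.iterate_add_apply]; congr 1; omega
      rw [he]; exact hyk.2
  have hpw : w ∈ S.preV (k + n) := hsub hw
  have hback : S.piece (k + n) w ⊆ S.preIm (S.piece n c) k := by
    intro y hy
    have hyp := S.mem_preV.mp (S.piece_subset hy)
    rw [S.mem_preIm]
    refine ⟨fun i hi => hyp.1 i (by omega), ?_⟩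
    have himg := S.image_piece (m := k) (n := n) (x := w) hpw
    have hfkw : S.f^[k] w ∈ S.piece n c := (S.mem_preIm.mp hw).2
    have he : S.piece n (S.f^[k] w) = S.piece n c := (connectedComponentIn_eq hfkw).symm
    exact he ▸ himg ⟨y, hy, rfl⟩
  refine subset_antisymm (connectedComponentIn_mono w hsub) ?_
  exact isPreconnected_connectedComponentIn.subset_connectedComponentIn
    (S.mem_piece hpw) hback
lemma no_return {X : Set ℂ} (hX : S.IsPieceUnion X) (hnice : S.Nice X) {z : ℂ} {k : ℕ}
    (hz : z ∈ S.D X \ X) (hk : S.IsLandingTime X z k) :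
    ∀ w ∈ S.landComp X z k, ∀ j < k, S.f^[j] w ∉ X := by
  obtain ⟨nC, hcV, hCe⟩ := S.component_X_piece hX hk.2.1
  have hzL := S.mem_landComp_self hz hk
  have hzmem : z ∈ S.preIm (S.piece nC (S.f^[k] z)) k := by
    have h2 := connectedComponentIn_subset _ _ hzL
    rwa [hCe] at h2
  have hLeq : S.landComp X z k = S.piece (k + nC) z := by
    show connectedComponentIn (S.preIm (connectedComponentIn X (S.f^[k] z)) k) z = _
    rw [hCe]
    exact S.preIm_piece_comp hcV hzmem
  rw [hLeq] at hzL
  have hzV : z ∈ S.preV (k + nC) := S.piece_subset hzL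
  intro w hw j hj hjX
  have hwL : w ∈ S.piece (k + nC) z := by rw [← hLeq]; exact hw
  have hwV : w ∈ S.preV (k + nC) := S.piece_subset hwL
  have hwp : S.piece (k + nC) w = S.piece (k + nC) z := (connectedComponentIn_eq hwL).symm
  have hwpre : w ∈ S.preIm (S.piece nC (S.f^[k] z)) k := by
    have h2 := connectedComponentIn_subset _ _ hw
    rwa [hCe] at h2
  have hfkw : S.f^[k] w ∈ S.piece nC (S.f^[k] z) := (S.mem_preIm.mp hwpre).2
  obtain ⟨nP, hPv, hPe⟩ := S.component_X_piece hX hjX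
  set r := k - j with hr
  have hrk : j + r = k := by omega
  have hr1 : 1 ≤ r := by omega
  have hadd : j + (r + nC) = k + nC := by omega
  have himgL : S.f^[j] '' S.piece (j + (r + nC)) w ⊆ S.piece (r + nC) (S.f^[j] w) :=
    S.image_piece (by rw [hadd]; exact hwV)
  have hjzQ : S.f^[j] z ∈ S.piece (r + nC) (S.f^[j] w) := by
    apply himgL
    refine ⟨z, ?_, rfl⟩
    rw [hadd, hwp]
    exact hzL
  have hjz : S.f^[j] z ∉ X := by
    rcases Nat.eq_zero_or_pos j with rfl | hj1
    · simpa using hz.2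
    · exact hk.2.2 j hj1 hj
  have hnP : r + nC < nP := by
    by_contra h
    push_neg at h
    have hPX : S.piece nP (S.f^[j] w) ⊆ X := by
      rw [← hPe]; exact connectedComponentIn_subset _ _
    exact hjz (hPX ((S.piece_antitone h) hjzQ))
  have hclP : closure (S.piece nP (S.f^[j] w)) ⊆ S.piece (r + nC) (S.f^[j] w) :=
    S.closure_piece_lt hnP hPv
  have hjwV : S.f^[j] w ∈ S.preV (r + nC) :=
    S.preV_iter (m := j) (n := r + nC) (by rw [hadd]; exact hwV)
  have hQC : S.f^[r] '' S.piece (r + nC) (S.f^[j] w) ⊆ S.piece nC (S.f^[k] z) := by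
    have h1 := S.image_piece (m := r) (n := nC) (x := S.f^[j] w) hjwV
    have he : S.f^[r] (S.f^[j] w) = S.f^[k] w := by
      rw [← Function.iterate_add_apply]; congr 1; omega
    rw [he] at h1
    have he2 : S.piece nC (S.f^[k] w) = S.piece nC (S.f^[k] z) :=
      (connectedComponentIn_eq hfkw).symm
    rwa [he2] at h1
  apply hnice (S.f^[j] w) hjX r hr1
  refine ⟨S.f^[k] z, hk.2.1, ?_⟩
  rw [hCe, hPe, Set.ssubset_iff_subset_ne]
  constructor
  · exact (Set.image_mono (subset_closure.trans hclP)).trans hQC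
  · intro hEqI
    have hcont : ContinuousOn (S.f^[r]) (closure (S.piece nP (S.f^[j] w))) :=
      (S.contOn_iter r (r + nC) (by omega)).mono (hclP.trans S.piece_subset)
    have hPcComp : IsCompact (closure (S.piece nP (S.f^[j] w))) :=
      Metric.isCompact_of_isClosed_isBounded isClosed_closure (S.piece_bounded _ _).closure
    have hTcomp : IsCompact (S.f^[r] '' closure (S.piece nP (S.f^[j] w))) :=
      hPcComp.image_of_continuousOn hcont
    have hCT : S.piece nC (S.f^[k] z) ⊆ S.f^[r] '' closure (S.piece nP (S.f^[j] w)) := by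
      rw [← hEqI]; exact Set.image_mono subset_closure
    have hTC : closure (S.piece nC (S.f^[k] z)) ⊆
        S.f^[r] '' closure (S.piece nP (S.f^[j] w)) :=
      closure_minimal hCT hTcomp.isClosed
    have hCopen : IsOpen (S.piece nC (S.f^[k] z)) := (S.preV_open nC).connectedComponentIn
    have hCne : (S.piece nC (S.f^[k] z)).Nonempty := ⟨S.f^[k] z, S.mem_piece hcV⟩
    have hCnuniv : S.piece nC (S.f^[k] z) ≠ Set.univ := by
      intro h
      have hb : Bornology.IsBounded (Set.univ : Set ℂ) := h ▸ S.piece_bounded nC (S.f^[k] z)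
      obtain ⟨B, hB⟩ := isBounded_iff_forall_norm_le.mp hb
      have h1 := hB ((|B| + 1 : ℝ) : ℂ) (Set.mem_univ _)
      rw [Complex.norm_real] at h1
      have h2 : |B| + 1 ≤ ‖|B| + 1‖ := le_abs_self _
      have h3 : B ≤ |B| := le_abs_self B
      linarith [le_trans h2 h1]
    have hfr : (frontier (S.piece nC (S.f^[k] z))).Nonempty := by
      by_contra h
      rw [Set.not_nonempty_iff_eq_empty] at h
      rcases isClopen_iff.mp (isClopen_iff_frontier_eq_empty.mpr h) with h1 | h1
      · exact hCne.ne_empty h1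
      · exact hCnuniv h1
    obtain ⟨q, hq⟩ := hfr
    obtain ⟨p, hpPc, hpq⟩ := hTC (frontier_subset_closure hq)
    have hin : S.f^[r] p ∈ S.piece nC (S.f^[k] z) := hQC ⟨p, hclP hpPc, rfl⟩
    rw [hCopen.frontier_eq] at hq
    rw [hpq] at hin
    exact hq.2 hin

lemma land_main {X : Set ℂ} (hX : S.IsPieceUnion X) (hnice : S.Nice X) {z : ℂ} {k : ℕ}
    (hz : z ∈ S.D X \ X) (hk : S.IsLandingTime X z k) :
    ∀ w ∈ S.landComp X z k, (w ∈ S.D X \ X) ∧ S.IsLandingTime X w k ∧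
      S.landComp X w k = S.landComp X z k := by
  intro w hw
  have hwpre : w ∈ S.preIm (connectedComponentIn X (S.f^[k] z)) k :=
    connectedComponentIn_subset _ _ hw
  have hDw : w ∈ S.D X :=
    Set.mem_iUnion.mpr ⟨k, S.preIm_mono (connectedComponentIn_subset _ _) k hwpre⟩
  have hfkw : S.f^[k] w ∈ connectedComponentIn X (S.f^[k] z) := (S.mem_preIm.mp hwpre).2
  have hnr := S.no_return hX hnice hz hk w hw
  have hwX : w ∉ X := by have := hnr 0 hk.1; simpa using this
  have hlt : S.IsLandingTime X w k :=
    ⟨hk.1, connectedComponentIn_subset _ _ hfkw, fun j _ h2 => hnr j h2⟩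
  refine ⟨⟨hDw, hwX⟩, hlt, ?_⟩
  show connectedComponentIn (S.preIm (connectedComponentIn X (S.f^[k] w)) k) w = _
  rw [← connectedComponentIn_eq hfkw]
  exact (connectedComponentIn_eq hw).symm

end Setup


/-- For a map in the set-up and a nice finite union `X` of puzzle
pieces, for every `z ∈ D(X) ∖ X`: every `w ∈ L_z(X)` lies in `D(X) ∖ X` and
satisfies `L_w(X) = L_z(X)`, and every `w' ∈ D(X) ∖ X` outside `L_z(X)`
satisfies `L_{w'}(X) ∩ L_z(X) = ∅`. -/
theorem stmt_3 (S : Setup) (X : Set ℂ) (hX : S.IsPieceUnion X) (hnice : S.Nice X)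
    (z : ℂ) (hz : z ∈ S.D X \ X) (k : ℕ) (hk : S.IsLandingTime X z k) :
    (∀ w ∈ S.landComp X z k, w ∈ S.D X \ X ∧
      ∀ k' : ℕ, S.IsLandingTime X w k' → S.landComp X w k' = S.landComp X z k) ∧
    (∀ w' ∈ S.D X \ X, w' ∉ S.landComp X z k →
      ∀ k' : ℕ, S.IsLandingTime X w' k' →
        S.landComp X w' k' ∩ S.landComp X z k = ∅) := by
  have main := S.land_main hX hnice hz hk
  constructor
  · intro w hw
    obtain ⟨hwD, hwk, hweq⟩ := main w hw
    refine ⟨hwD, fun k' hk' => ?_⟩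
    obtain rfl : k' = k := S.landing_unique hk' hwk
    exact hweq
  · intro w' hw' hw'L k' hk'
    rw [Set.eq_empty_iff_forall_notMem]
    rintro u ⟨huw, huz⟩
    obtain ⟨_, huk, hueq⟩ := main u huz
    have main' := S.land_main hX hnice hw' hk'
    obtain ⟨_, huk', hueq'⟩ := main' u huw
    obtain rfl : k = k' := S.landing_unique huk huk'
    have hself : w' ∈ S.landComp X w' k := S.mem_landComp_self hw' hk'
    rw [← hueq', hueq] at hself
    exact hw'L hself
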